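/- Let a₁, …, a_ρ (ρ ≥ 1) be positive integers with gcd(a₁, …, a_ρ) = 1, and let m = min_α a_α and M = max_α a_α. Then every integer n ≥ (m − 1)·(M − 1) can be written as n = Σ_{α=1}^{ρ} n_α · a_α with non-negative integers n₁, …, n_ρ. -/

import Mathlib

theorem bezout {ι : Type*} [DecidableEq ι] (s : Finset ι) (f : ι → ℕ) :
    ∃ z : ι → ℤ, ((s.gcd f : ℕ) : ℤ) = ∑ i ∈ s, z i * f i := by
  induction s using Finset.induction with
  | empty => exact ⟨0, by simp⟩
  | insert i s hi ih =>
    obtain ⟨z, hz⟩ := ih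
    refine ⟨fun j => if j = i then Nat.gcdA (f i) (s.gcd f) else z j * Nat.gcdB (f i) (s.gcd f), ?_⟩
    rw [Finset.gcd_insert, Finset.sum_insert hi]
    simp only [if_pos rfl]
    have h := Nat.gcd_eq_gcd_ab (f i) (s.gcd f)
    have h2 : ∑ j ∈ s, (if j = i then Nat.gcdA (f i) (s.gcd f) else z j * Nat.gcdB (f i) (s.gcd f)) * (f j : ℤ)
        = (∑ j ∈ s, z j * (f j : ℤ)) * Nat.gcdB (f i) (s.gcd f) := by
      rw [Finset.sum_mul]
      apply Finset.sum_congr rfl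
      intro j hj
      rw [if_neg (by rintro rfl; exact hi hj)]
      ring
    rw [h2, ← hz]
    have h3 : gcd (f i) (s.gcd f) = Nat.gcd (f i) (s.gcd f) := rfl
    rw [h3, h]
    simp [mul_comm]
theorem toListAux {ρ : ℕ} (a : Fin ρ → ℕ) (c : Fin ρ → ℕ) :
    ∃ l : List ℕ, (∀ x ∈ l, ∃ α, x = a α) ∧ l.sum = ∑ α, c α * a α := by
  refine ⟨((List.finRange ρ).map fun α => List.replicate (c α) (a α)).flatten, ?_, ?_⟩
  · intro x hx
    simp only [List.mem_flatten, List.mem_map] at hx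
    obtain ⟨L, ⟨α, -, rfl⟩, hx⟩ := hx
    exact ⟨α, List.eq_of_mem_replicate hx⟩
  · rw [List.sum_flatten, List.map_map]
    simp [Function.comp_def, List.sum_replicate, smul_eq_mul, Fin.sum_univ_def]
theorem ofListAux {ρ : ℕ} (a : Fin ρ → ℕ) :
    ∀ l : List ℕ, (∀ x ∈ l, ∃ α, x = a α) → ∃ c : Fin ρ → ℕ, l.sum = ∑ α, c α * a α := by
  intro l
  induction l with
  | nil => exact fun _ => ⟨0, by simp⟩
  | cons x l ih =>
    intro h
    obtain ⟨β, rfl⟩ := h x (List.mem_cons_self)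
    obtain ⟨c, hc⟩ := ih (fun y hy => h y (List.mem_cons_of_mem _ hy))
    refine ⟨fun α => c α + (if α = β then 1 else 0), ?_⟩
    have : ∀ α, (c α + (if α = β then 1 else 0)) * a α
        = c α * a α + (if α = β then a α else 0) := by
      intro α; split <;> ring
    simp only [this, Finset.sum_add_distrib, Finset.sum_ite_eq' Finset.univ β,
      Finset.mem_univ, if_true, List.sum_cons, hc]
    ring
theorem reduceAux (m : ℕ) (hm : 0 < m) :
    ∀ (k : ℕ) (l : List ℕ), l.length ≤ k →
    ∃ l' : List ℕ, (∀ x ∈ l', x ∈ l) ∧ l'.length ≤ m - 1 ∧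
      ((l'.sum : ZMod m) = (l.sum : ZMod m)) := by
  haveI : NeZero m := ⟨hm.ne'⟩
  intro k
  induction k with
  | zero =>
    intro l hl
    refine ⟨l, fun x hx => hx, ?_, rfl⟩
    omega
  | succ k ih =>
    intro l hl
    by_cases hlen : l.length ≤ m - 1
    · exact ⟨l, fun x hx => hx, hlen, rfl⟩
    · push_neg at hlen
      have hml : m ≤ l.length := by omega
      have hcard : Fintype.card (ZMod m) < Fintype.card (Fin (l.length + 1)) := by
        rw [ZMod.card, Fintype.card_fin]; omega
      obtain ⟨i, j, hij, hfeq⟩ := Fintype.exists_ne_map_eq_of_card_lt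
        (fun t : Fin (l.length + 1) => (((l.take (t : ℕ)).sum : ℕ) : ZMod m)) hcard
      have main : ∀ i j : ℕ, i < j → j ≤ l.length →
          (((l.take i).sum : ℕ) : ZMod m) = (((l.take j).sum : ℕ) : ZMod m) →
          ∃ l' : List ℕ, (∀ x ∈ l', x ∈ l) ∧ l'.length ≤ m - 1 ∧
            ((l'.sum : ZMod m) = (l.sum : ZMod m)) := by
        intro i j hij hjle hfe
        set l₂ : List ℕ := l.take i ++ l.drop j with hl₂
        have hsub : l₂.Sublist l := by
          have h1 : l.take i = (l.take j).take i := by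
            rw [List.take_take, min_eq_left hij.le]
          have h2 : (l.take j).take i |>.Sublist (l.take j) := List.take_sublist _ _
          rw [hl₂, h1]
          have h3 := h2.append_right (l.drop j)
          rwa [List.take_append_drop] at h3
        have hlenl₂ : l₂.length ≤ k := by
          have : l₂.length = i + (l.length - j) := by
            simp [hl₂, List.length_take, List.length_drop]
            omega
          omega
        have hsum : (l₂.sum : ZMod m) = (l.sum : ZMod m) := by
          have hsplit : l.sum = (l.take j).sum + (l.drop j).sum := by
            conv_lhs => rw [← List.take_append_drop j l]
            rw [List.sum_append]
          have : l₂.sum = (l.take i).sum + (l.drop j).sum := by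
            rw [hl₂, List.sum_append]
          rw [this, hsplit, Nat.cast_add, Nat.cast_add, hfe]
        obtain ⟨l', h1', h2', h3'⟩ := ih l₂ hlenl₂
        exact ⟨l', fun x hx => hsub.mem (h1' x hx), h2', h3'.trans hsum⟩
      rcases hij.lt_or_gt with hlt | hlt
      · exact main (i : ℕ) (j : ℕ) hlt (Nat.lt_succ_iff.mp j.isLt) hfeq
      · exact main (j : ℕ) (i : ℕ) hlt (Nat.lt_succ_iff.mp i.isLt) hfeq.symm

/-- Schur–Brauer bound: for coprime positive integers `a₁, …, a_ρ` with minimum `m`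
and maximum `M`, every `n ≥ (m-1)(M-1)` is a non-negative integer combination. -/
theorem stmt_2 (ρ : ℕ) (hρ : 1 ≤ ρ) (a : Fin ρ → ℕ) (ha : ∀ α, 0 < a α)
    (hgcd : Finset.univ.gcd a = 1) (m M : ℕ)
    (hm : IsLeast (Set.range a) m) (hM : IsGreatest (Set.range a) M) :
    ∀ n : ℕ, (m - 1) * (M - 1) ≤ n → ∃ c : Fin ρ → ℕ, n = ∑ α, c α * a α := by
  intro n hn
  obtain ⟨⟨i₀, hi₀⟩, hmin⟩ := hm
  obtain ⟨⟨j₀, hj₀⟩, hmax⟩ := hM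
  have hm1 : 1 ≤ m := hi₀ ▸ ha i₀
  have hM1 : 1 ≤ M := hj₀ ▸ ha j₀
  by_cases hm2 : m = 1
  · refine ⟨fun α => if α = i₀ then n else 0, ?_⟩
    have expand : ∀ α, (if α = i₀ then n else 0) * a α = (if α = i₀ then n * a α else 0) := by
      intro α; split <;> ring
    simp only [expand, Finset.sum_ite_eq' Finset.univ i₀, Finset.mem_univ, if_true, hi₀, hm2,
      mul_one]
  · have hm2' : 2 ≤ m := by omega
    haveI : NeZero m := ⟨by omega⟩
    obtain ⟨z, hz⟩ := bezout Finset.univ a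
    rw [hgcd] at hz
    set c₀ : Fin ρ → ℕ := fun α => ((n * z α) % (m : ℤ)).toNat with hc₀
    have key : ∀ α, ((c₀ α : ℕ) : ZMod m) = (n : ZMod m) * ((z α : ℤ) : ZMod m) := by
      intro α
      have h1 : ((c₀ α : ℕ) : ℤ) = (n * z α) % (m : ℤ) :=
        Int.toNat_of_nonneg (Int.emod_nonneg _ (by exact_mod_cast (by omega : m ≠ 0)))
      have h2 : ((c₀ α : ℕ) : ZMod m) = (((c₀ α : ℕ) : ℤ) : ZMod m) := by push_cast; rfl
      rw [h2, h1, ZMod.intCast_mod]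
      push_cast
      ring
    have hz' : (1 : ZMod m) = ∑ α, ((z α : ℤ) : ZMod m) * (a α : ZMod m) := by
      have := congrArg (fun t : ℤ => (t : ZMod m)) hz
      push_cast at this
      exact this
    have hsum : ((∑ α, c₀ α * a α : ℕ) : ZMod m) = (n : ZMod m) := by
      push_cast
      calc ∑ α, (c₀ α : ZMod m) * (a α : ZMod m)
          = ∑ α, (n : ZMod m) * (((z α : ℤ) : ZMod m) * (a α : ZMod m)) := by
            apply Finset.sum_congr rfl; intro α _; rw [key]; ring
        _ = (n : ZMod m) * ∑ α, ((z α : ℤ) : ZMod m) * (a α : ZMod m) := by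
            rw [Finset.mul_sum]
        _ = (n : ZMod m) := by rw [← hz', mul_one]
    obtain ⟨l₀, hl₀mem, hl₀sum⟩ := toListAux a c₀
    obtain ⟨l', hl'mem, hl'len, hl'sum⟩ := reduceAux m (by omega) l₀.length l₀ le_rfl
    have hl'range : ∀ x ∈ l', ∃ α, x = a α := fun x hx => hl₀mem x (hl'mem x hx)
    obtain ⟨c₁, hc₁⟩ := ofListAux a l' hl'range
    have htle : l'.sum ≤ (m - 1) * M := by
      have h1 : l'.sum ≤ l'.length * M := by
        have := List.sum_le_card_nsmul l' M (fun x hx => by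
          obtain ⟨α, rfl⟩ := hl'range x hx; exact hmax ⟨α, rfl⟩)
        simpa [smul_eq_mul] using this
      exact h1.trans (Nat.mul_le_mul_right M hl'len)
    have htmod : l'.sum ≡ n [MOD m] := by
      have : ((l'.sum : ℕ) : ZMod m) = (n : ZMod m) := by
        rw [hl'sum, hl₀sum, hsum]
      exact (ZMod.natCast_eq_natCast_iff _ _ _).mp this
    have hexp : (m - 1) * M = (m - 1) * (M - 1) + (m - 1) := by
      cases M with
      | zero => omega
      | succ M' => simp only [Nat.succ_sub_one]; ring
    have htn : l'.sum ≤ n := by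
      by_contra hcon
      push_neg at hcon
      have hd : m ∣ l'.sum - n := (Nat.modEq_iff_dvd' hcon.le).mp htmod.symm
      obtain ⟨q, hq⟩ := hd
      have hq1 : 1 ≤ q := by
        rcases Nat.eq_zero_or_pos q with h | h
        · subst h; simp at hq; omega
        · exact h
      have h6 : m ≤ l'.sum - n := hq ▸ Nat.le_mul_of_pos_right m hq1
      have hA : l'.sum ≤ n + (m - 1) :=
        htle.trans (by rw [hexp]; exact Nat.add_le_add_right hn _)
      omega
    have hd2 : m ∣ n - l'.sum := (Nat.modEq_iff_dvd' htn).mp htmod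
    obtain ⟨q, hq⟩ := hd2
    have hneq : n = m * q + l'.sum := (Nat.sub_eq_iff_eq_add htn).mp hq
    refine ⟨fun α => c₁ α + (if α = i₀ then q else 0), ?_⟩
    have expand : ∀ α, (c₁ α + (if α = i₀ then q else 0)) * a α
        = c₁ α * a α + (if α = i₀ then q * a α else 0) := by
      intro α; split <;> ring
    simp only [expand, Finset.sum_add_distrib, Finset.sum_ite_eq' Finset.univ i₀,
      Finset.mem_univ, if_true, ← hc₁, hi₀]
    have hcq : m * q = q * m := Nat.mul_comm m q
    omega
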